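/- Let G be a finite nested group with chain of centers G = X_0 > X_1 > ⋯ > X_n ≥ 1. Then G is nilpotent if and only if [X_{i-1},G] ≤ X_i for all i with 1 ≤ i ≤ n. -/

import Mathlib

open CategoryTheory

noncomputable section

/-- The kernel of the character of `V`: `{g | χ(g) = χ(1)}`. -/
def charKernel {G : Type} [Group G] (V : FDRep ℂ G) : Set G :=
  {g | V.character g = V.character 1}

/-- The center of the character of `V`: `{g | |χ(g)| = χ(1)}`. -/
def charCenter {G : Type} [Group G] (V : FDRep ℂ G) : Set G :=
  {g | ((‖V.character g‖ : ℝ) : ℂ) = V.character 1}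

/-- The degree `χ(1)` of the character of `V`. -/
def charDegree {G : Type} [Group G] (V : FDRep ℂ G) : ℕ :=
  Module.finrank ℂ V

/-- A group is nested if the centers of its irreducible characters form a chain. -/
def Nested (G : Type) [Group G] : Prop :=
  ∀ V W : FDRep ℂ G, Simple V → Simple W →
    charCenter V ⊆ charCenter W ∨ charCenter W ⊆ charCenter V

/-- `G = X 0 > X 1 > ⋯ > X n ≥ 1` is the chain of centers for `G`: the `X i` are the
distinct subgroups arising as centers of irreducible characters of `G`. -/
def IsChainOfCenters {G : Type} [Group G] (n : ℕ) (X : ℕ → Subgroup G) : Prop :=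
  X 0 = ⊤ ∧ (∀ i ≤ n, (X i).Normal) ∧ (∀ i < n, X (i + 1) < X i) ∧
    (∀ i ≤ n, ∃ V : FDRep ℂ G, Simple V ∧ charCenter V = (X i : Set G)) ∧
    (∀ V : FDRep ℂ G, Simple V → ∃ i ≤ n, charCenter V = (X i : Set G))

/-- `N` is a minimal normal subgroup of `H`. -/
def IsMinimalNormal {H : Type*} [Group H] (N : Subgroup H) : Prop :=
  N.Normal ∧ N ≠ ⊥ ∧ ∀ K : Subgroup H, K.Normal → K ≠ ⊥ → K ≤ N → K = N

/-- An elementary abelian `p`-group: abelian with every element of order dividing `p`. -/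
def IsElementaryAbelian (p : ℕ) (H : Type*) [Group H] : Prop :=
  (∀ a b : H, a * b = b * a) ∧ ∀ a : H, a ^ p = 1

open scoped commutatorElement

/-! ### Auxiliary linear algebra -/

open Polynomial in
private lemma aux_multiset_eq_const (R : Multiset ℂ) (hu : ∀ μ ∈ R, ‖μ‖ = 1)
    (hsum : ‖R.sum‖ = R.card) (hne : R.card ≠ 0) :
    ∃ c : ℂ, ‖c‖ = 1 ∧ ∀ μ ∈ R, μ = c := by
  set s := R.sum with hs
  have hcne : ((R.card : ℂ)) ≠ 0 := Nat.cast_ne_zero.2 hne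
  set u : ℂ := s / R.card with hu'
  have huabs : ‖u‖ = 1 := by
    rw [hu', norm_div, hsum]
    simp only [Complex.norm_natCast]
    field_simp
  have hcu : s * (starRingEnd ℂ) u = (R.card : ℂ) := by
    have h1 : (starRingEnd ℂ) u = (starRingEnd ℂ) s / (R.card : ℂ) := by
      rw [hu', map_div₀]; norm_num
    rw [h1, mul_div_assoc', Complex.mul_conj, Complex.normSq_eq_norm_sq, hsum]
    push_cast
    rw [pow_two, mul_div_assoc, div_self hcne, mul_one]
  have key : ∀ μ ∈ R, (μ * (starRingEnd ℂ) u).re = 1 := by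
    by_contra h
    push_neg at h
    obtain ⟨μ₀, hμ₀R, hμ₀⟩ := h
    have hle : ∀ μ ∈ R, (μ * (starRingEnd ℂ) u).re ≤ 1 := by
      intro μ hμ
      calc (μ * (starRingEnd ℂ) u).re ≤ ‖(μ * (starRingEnd ℂ) u)‖ := Complex.re_le_norm _
        _ = 1 := by rw [norm_mul, hu μ hμ, Complex.norm_conj, huabs, one_mul]
    have hlt : (μ₀ * (starRingEnd ℂ) u).re < 1 := lt_of_le_of_ne (hle _ hμ₀R) hμ₀
    have hsum2 : (R.map (fun μ => (μ * (starRingEnd ℂ) u).re)).sum = R.card := by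
      have e1 : R.map (fun μ => (μ * (starRingEnd ℂ) u).re)
          = (R.map (fun μ => μ * (starRingEnd ℂ) u)).map Complex.re := by
        rw [Multiset.map_map]; rfl
      have e2 : (R.map (fun μ => μ * (starRingEnd ℂ) u)).sum = s * (starRingEnd ℂ) u := by
        rw [Multiset.sum_map_mul_right, Multiset.map_id']
      have e3 : (s * (starRingEnd ℂ) u).re = R.card := by rw [hcu]; simp
      rw [e1, ← Complex.coe_reAddGroupHom, ← AddMonoidHom.map_multiset_sum, e2,
        Complex.coe_reAddGroupHom, e3]
    obtain ⟨T, hT⟩ := Multiset.exists_cons_of_mem hμ₀R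
    subst hT
    rw [Multiset.map_cons, Multiset.sum_cons] at hsum2
    have hTle : ((T.map (fun μ => (μ * (starRingEnd ℂ) u).re)).sum) ≤ T.card := by
      have := Multiset.sum_le_card_nsmul (T.map (fun μ => (μ * (starRingEnd ℂ) u).re)) 1
        (by intro x hx; obtain ⟨μ, hμ, rfl⟩ := Multiset.mem_map.1 hx
            exact hle μ (Multiset.mem_cons_of_mem hμ))
      simpa using this
    have hcard : ((Multiset.card (μ₀ ::ₘ T) : ℝ)) < 1 + T.card := by
      rw [← hsum2]
      linarith
    rw [Multiset.card_cons] at hcard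
    push_cast at hcard
    linarith
  refine ⟨u, huabs, fun μ hμ => ?_⟩
  have habs1 : ‖(μ * (starRingEnd ℂ) u)‖ = 1 := by
    rw [norm_mul, hu μ hμ, Complex.norm_conj, huabs, one_mul]
  have hre := key μ hμ
  have hnsq : (μ * (starRingEnd ℂ) u).re ^ 2 + (μ * (starRingEnd ℂ) u).im ^ 2 = 1 := by
    have := Complex.sq_norm (μ * (starRingEnd ℂ) u)
    rw [habs1] at this
    rw [Complex.normSq_apply] at this
    nlinarith [this]
  have him : (μ * (starRingEnd ℂ) u).im = 0 := by
    have h2 : (μ * (starRingEnd ℂ) u).im ^ 2 = 0 := by rw [hre] at hnsq; linarith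
    exact pow_eq_zero_iff (n := 2) (by norm_num) |>.1 h2
  have h1 : μ * (starRingEnd ℂ) u = 1 := Complex.ext (by simpa using hre) him
  have h2 : (starRingEnd ℂ) u * u = 1 := by
    rw [mul_comm, Complex.mul_conj, Complex.normSq_eq_norm_sq, huabs]; norm_num
  calc μ = μ * ((starRingEnd ℂ) u * u) := by rw [h2, mul_one]
    _ = (μ * (starRingEnd ℂ) u) * u := by ring
    _ = u := by rw [h1, one_mul]

open Polynomial in
private lemma aux_sqfree_xn (N : ℕ) (hN : N ≠ 0) : Squarefree ((X : ℂ[X]) ^ N - 1) := by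
  have := Polynomial.separable_X_pow_sub_C (1 : ℂ)
    (by exact_mod_cast (Nat.cast_ne_zero (R := ℂ)).2 hN) one_ne_zero
  simpa using this.squarefree

open Polynomial in
open scoped Matrix in
private lemma aux_matrix_scalar {d : ℕ} (hd : d ≠ 0) (M : Matrix (Fin d) (Fin d) ℂ)
    (N : ℕ) (hN : N ≠ 0) (hM : M ^ N = 1)
    (htr : ‖M.trace‖ = d) :
    ∃ c : ℂ, ‖c‖ = 1 ∧ M = c • 1 := by
  haveI : NeZero d := ⟨hd⟩
  have hsplit : M.charpoly.Splits := IsAlgClosed.splits _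
  have hmono := M.charpoly_monic
  have hdeg : M.charpoly.natDegree = d := by simpa using M.charpoly_natDegree_eq_dim
  have hcard : M.charpoly.roots.card = d := by
    simpa [hdeg] using (Polynomial.splits_iff_card_roots.1 hsplit)
  have hrootsN : ∀ μ ∈ M.charpoly.roots, μ ^ N = 1 := by
    intro μ hμ
    have hroot : M.charpoly.IsRoot μ := Polynomial.isRoot_of_mem_roots hμ
    have hdet : (Matrix.scalar (Fin d) μ - M).det = 0 := by
      have e : Polynomial.eval μ M.charpoly = (Matrix.scalar (Fin d) μ - M).det := by
        rw [Matrix.charpoly, eval_det, Matrix.matPolyEquiv_charmatrix]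
        simp
      rw [← e]; exact hroot
    obtain ⟨v, hv, hveq⟩ := (Matrix.exists_mulVec_eq_zero_iff).2 hdet
    have heig : M *ᵥ v = μ • v := by
      have : Matrix.scalar (Fin d) μ *ᵥ v - M *ᵥ v = 0 := by
        rw [← Matrix.sub_mulVec]; exact hveq
      have h2 : Matrix.scalar (Fin d) μ *ᵥ v = μ • v := by
        rw [show Matrix.scalar (Fin d) μ = μ • (1 : Matrix (Fin d) (Fin d) ℂ) by
              simp [Matrix.scalar, Matrix.smul_one_eq_diagonal]]
        rw [Matrix.smul_mulVec, Matrix.one_mulVec]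
      rw [h2] at this
      exact (sub_eq_zero.1 this).symm
    have hpow : ∀ k : ℕ, (M ^ k) *ᵥ v = μ ^ k • v := by
      intro k
      induction k with
      | zero => simp [Matrix.one_mulVec]
      | succ k ih =>
        rw [pow_succ, ← Matrix.mulVec_mulVec, heig, Matrix.mulVec_smul, ih, smul_smul,
          ← pow_succ']
    have := hpow N
    rw [hM, Matrix.one_mulVec] at this
    obtain ⟨i, hi⟩ := Function.ne_iff.1 hv
    have : v i = μ ^ N * v i := congrFun this i
    have h3 : (μ ^ N - 1) * v i = 0 := by ring_nf; linear_combination -this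
    rcases mul_eq_zero.1 h3 with h | h
    · exact sub_eq_zero.1 h
    · exact absurd h (by simpa using hi)
  have habs1 : ∀ μ ∈ M.charpoly.roots, ‖μ‖ = 1 := by
    intro μ hμ
    have h1 : ‖μ‖ ^ N = 1 := by
      rw [← norm_pow, hrootsN μ hμ]; simp
    rcases lt_trichotomy (‖μ‖) 1 with h | h | h
    · exact absurd h1 (by have := pow_lt_one₀ (norm_nonneg μ) h hN; linarith)
    · exact h
    · exact absurd h1 (by have := one_lt_pow₀ h hN; linarith)
  have htr2 : M.trace = M.charpoly.roots.sum := Matrix.trace_eq_sum_roots_charpoly (A := M)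
  obtain ⟨c, hc1, hc2⟩ := aux_multiset_eq_const M.charpoly.roots habs1
    (by rw [← htr2, htr, hcard]) (by rw [hcard]; exact hd)
  haveI : Nonempty (Fin d) := ⟨⟨0, Nat.pos_of_ne_zero hd⟩⟩
  have hint : IsIntegral ℂ M := IsIntegral.of_finite ℂ M
  set m := minpoly ℂ M with hm
  have hmmonic : m.Monic := minpoly.monic hint
  have hdvd1 : m ∣ (X : ℂ[X]) ^ N - 1 := minpoly.dvd ℂ M (by simp [hM])
  have hsqf : Squarefree m := (aux_sqfree_xn N hN).squarefree_of_dvd hdvd1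
  have hdvd2 : m ∣ M.charpoly := Matrix.minpoly_dvd_charpoly M
  have hrootsm : ∀ μ ∈ m.roots, μ = c := fun μ hμ =>
    hc2 μ (Multiset.mem_of_le (Polynomial.roots.le_of_dvd hmono.ne_zero hdvd2) hμ)
  have hmsplit : m.Splits := IsAlgClosed.splits _
  have hkcard : m.roots.card = m.natDegree := Polynomial.splits_iff_card_roots.1 hmsplit
  have hkpos : 0 < m.natDegree := minpoly.natDegree_pos hint
  have hrep : m.roots = Multiset.replicate m.natDegree c :=
    Multiset.eq_replicate.2 ⟨hkcard, hrootsm⟩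
  have hprod : m = (X - C c) ^ m.natDegree := by
    conv_lhs => rw [hmsplit.eq_prod_roots_of_monic hmmonic]
    rw [hrep, Multiset.map_replicate, Multiset.prod_replicate]
  have hk1 : m.natDegree = 1 := by
    by_contra hk
    have h2 : 2 ≤ m.natDegree := by omega
    have : (X - C c) * (X - C c) ∣ m := by
      rw [hprod, ← pow_two]
      exact pow_dvd_pow _ h2
    have := hsqf _ this
    exact Polynomial.not_isUnit_of_natDegree_pos _ (by simp) this
  have hmeq : m = X - C c := by rw [hprod, hk1, pow_one]
  have haev : (aeval M) m = 0 := minpoly.aeval ℂ M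
  rw [hmeq] at haev
  simp only [map_sub, aeval_X, aeval_C] at haev
  refine ⟨c, hc1, ?_⟩
  have : M = algebraMap ℂ _ c := by rw [← sub_eq_zero]; exact haev
  rw [this, Algebra.algebraMap_eq_smul_one]

private lemma aux_end_scalar {V : Type} [AddCommGroup V] [Module ℂ V]
    [FiniteDimensional ℂ V] (f : V →ₗ[ℂ] V) (N : ℕ) (hN : N ≠ 0) (hf : f ^ N = 1)
    (htr : ‖(LinearMap.trace ℂ V f)‖ = Module.finrank ℂ V) :
    ∃ c : ℂ, ‖c‖ = 1 ∧ f = c • (1 : V →ₗ[ℂ] V) := by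
  by_cases hd : Module.finrank ℂ V = 0
  · haveI : Subsingleton V := by
      have := Module.finrank_zero_iff (R := ℂ) (M := V) |>.1 hd
      infer_instance
    exact ⟨1, by simp, by ext v; exact Subsingleton.elim _ _⟩
  · let b := Module.finBasis ℂ V
    let e := LinearMap.toMatrixAlgEquiv b
    have hM : (e f) ^ N = 1 := by rw [← map_pow, hf, map_one]
    have htr' : ‖(e f).trace‖ = (Module.finrank ℂ V : ℝ) := by
      have : (e f).trace = LinearMap.trace ℂ V f := by
        rw [LinearMap.trace_eq_matrix_trace ℂ b f]
        rfl
      rw [this]; exact htr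
    obtain ⟨c, hc1, hc2⟩ := aux_matrix_scalar hd (e f) N hN hM htr'
    refine ⟨c, hc1, ?_⟩
    apply e.injective
    rw [hc2, map_smul, map_one]

/-! ### Character centers and scalar actions -/

section CharLemmas

variable {G : Type} [Group G]

private lemma aux_rho_pow_card [Fintype G] (V : FDRep ℂ G) (g : G) :
    (V.ρ g) ^ (Fintype.card G) = 1 := by
  rw [← map_pow, pow_card_eq_one, map_one]

private lemma aux_abs_eq_one_of_pow {x : ℝ} (hx : 0 ≤ x) {N : ℕ} (hN : N ≠ 0)
    (h : x ^ N = 1) : x = 1 := by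
  rcases lt_trichotomy x 1 with h' | h' | h'
  · have := pow_lt_one₀ hx h' hN; linarith
  · exact h'
  · have := one_lt_pow₀ h' hN; linarith

private lemma aux_scalar_mem_charCenter [Fintype G] (V : FDRep ℂ G) (g : G) (c : ℂ)
    (hg : V.ρ g = c • (1 : V →ₗ[ℂ] V)) : g ∈ charCenter V := by
  have htr : V.character g = c * Module.finrank ℂ V := by
    show LinearMap.trace ℂ V (V.ρ g) = _
    rw [hg, map_smul, LinearMap.trace_one]
    simp
  by_cases hd : Module.finrank ℂ V = 0
  · show (↑‖V.character g‖ : ℂ) = V.character 1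
    rw [htr, FDRep.char_one, hd]
    simp
  · have hcN : c ^ (Fintype.card G) = 1 := by
      have h1 := aux_rho_pow_card V g
      rw [hg, smul_pow, one_pow] at h1
      have h2 := congrArg (LinearMap.trace ℂ V) h1
      rw [map_smul, LinearMap.trace_one] at h2
      have : (c ^ Fintype.card G) * (Module.finrank ℂ V : ℂ) = (Module.finrank ℂ V : ℂ) := by
        simpa using h2
      have hdc : (Module.finrank ℂ V : ℂ) ≠ 0 := Nat.cast_ne_zero.2 hd
      field_simp at this
      exact this
    have habsc : ‖c‖ = 1 := by
      haveI : Nonempty G := ⟨1⟩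
      apply aux_abs_eq_one_of_pow (norm_nonneg c) (Fintype.card_ne_zero (α := G))
      rw [← norm_pow, hcN, norm_one]
    show (↑‖V.character g‖ : ℂ) = V.character 1
    rw [htr, FDRep.char_one, norm_mul, habsc]
    simp [Complex.norm_natCast]

private lemma aux_charCenter_scalar [Fintype G] (V : FDRep ℂ G) (g : G)
    (hg : g ∈ charCenter V) :
    ∃ c : ℂ, V.ρ g = c • (1 : V →ₗ[ℂ] V) := by
  have habs : ‖(LinearMap.trace ℂ V (V.ρ g))‖ = Module.finrank ℂ V := by
    have h1 : (↑‖V.character g‖ : ℂ) = V.character 1 := hg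
    rw [FDRep.char_one] at h1
    exact_mod_cast h1
  haveI : Nonempty G := ⟨1⟩
  obtain ⟨c, _, hc⟩ := aux_end_scalar (V.ρ g) (Fintype.card G)
    (Fintype.card_ne_zero (α := G)) (aux_rho_pow_card V g) habs
  exact ⟨c, hc⟩

private lemma aux_rho_commutator_eq_one (V : FDRep ℂ G) (g : G) (c : ℂ)
    (hg : V.ρ g = c • (1 : V →ₗ[ℂ] V)) (h : G) : V.ρ ⁅g, h⁆ = 1 := by
  have hcomm : V.ρ g * V.ρ h = V.ρ h * V.ρ g := by
    rw [hg, Algebra.smul_def, mul_one]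
    exact Algebra.commutes c (V.ρ h)
  have h1 : V.ρ g * V.ρ g⁻¹ = 1 := by rw [← map_mul, mul_inv_cancel, map_one]
  have h2 : V.ρ h * V.ρ h⁻¹ = 1 := by rw [← map_mul, mul_inv_cancel, map_one]
  show V.ρ (g * h * g⁻¹ * h⁻¹) = 1
  rw [map_mul, map_mul, map_mul, hcomm, mul_assoc (V.ρ h) (V.ρ g), mul_assoc (V.ρ h)]
  rw [h1, one_mul, h2]

private lemma aux_commute_of_rho_commutator (V : FDRep ℂ G) (y h : G)
    (h1 : V.ρ ⁅y, h⁆ = 1) : V.ρ y * V.ρ h = V.ρ h * V.ρ y := by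
  have e1 : V.ρ y * V.ρ h * V.ρ y⁻¹ * V.ρ h⁻¹ = 1 := by
    rw [← map_mul, ← map_mul, ← map_mul]
    exact h1
  have e2 : V.ρ y * V.ρ h * V.ρ y⁻¹ * V.ρ h⁻¹ * V.ρ h = V.ρ h := by rw [e1, one_mul]
  rw [mul_assoc _ (V.ρ h⁻¹) (V.ρ h), ← map_mul V.ρ h⁻¹ h, inv_mul_cancel, map_one, mul_one] at e2
  have e3 : V.ρ y * V.ρ h * V.ρ y⁻¹ * V.ρ y = V.ρ h * V.ρ y := by rw [e2]
  rw [mul_assoc _ (V.ρ y⁻¹) (V.ρ y), ← map_mul V.ρ y⁻¹ y, inv_mul_cancel, map_one, mul_one] at e3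
  exact e3

private lemma aux_schur_scalar (V : FDRep ℂ G) [Simple V] (g : G)
    (hcomm : ∀ h : G, V.ρ g * V.ρ h = V.ρ h * V.ρ g) :
    ∃ c : ℂ, V.ρ g = c • (1 : V →ₗ[ℂ] V) := by
  let φ : V ⟶ V := ⟨FGModuleCat.ofHom (V.ρ g), by intro h; ext x; exact LinearMap.congr_fun (hcomm h) x⟩
  obtain ⟨c, hc⟩ := endomorphism_simple_eq_smul_id (𝕜 := ℂ) φ
  refine ⟨c, ?_⟩
  have := congrArg Action.Hom.hom hc
  rw [Action.smul_hom] at this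
  have := congrArg (fun f => f.hom.hom) this
  exact this.symm

end CharLemmas

/-! ### A criterion for simplicity and a separation lemma -/

section SimpleCriterion

variable {G : Type} [Group G]

/-- Subrepresentation on an invariant subspace. -/
private def auxSubrep (V : FDRep ℂ G) (p : Submodule ℂ V)
    (hp : ∀ g : G, ∀ v ∈ p, V.ρ g v ∈ p) : FDRep ℂ G :=
  FDRep.of (V := ↥p)
    { toFun := fun g => (V.ρ g).restrict (p := p) (q := p) (fun v hv => hp g v hv)
      map_one' := by ext v; simp [LinearMap.restrict_apply]
      map_mul' := by intro g h; ext v; simp [LinearMap.restrict_apply] }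

private def auxSubrepι (V : FDRep ℂ G) (p : Submodule ℂ V)
    (hp : ∀ g : G, ∀ v ∈ p, V.ρ g v ∈ p) : auxSubrep V p hp ⟶ V :=
  ⟨FGModuleCat.ofHom p.subtype, fun _ => rfl⟩

private lemma aux_simple_of_invariant_subspaces (V : FDRep ℂ G) (hV : Nontrivial V)
    (h : ∀ p : Submodule ℂ V, (∀ g : G, ∀ v ∈ p, V.ρ g v ∈ p) → p = ⊥ ∨ p = ⊤) :
    Simple V := by
  constructor
  intro Y f hf
  constructor
  · intro hiso hf0
    have h1 : inv f ≫ f = 𝟙 V := IsIso.inv_hom_id f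
    have hf0' : f.hom = (0 : Y.V ⟶ V.V) := by rw [hf0]; exact Action.zero_hom
    obtain ⟨v, hv⟩ := exists_ne (0 : V)
    apply hv
    have h2 : (𝟙 V : V ⟶ V).hom v = f.hom ((inv f).hom v) := by
      rw [← h1]; rfl
    rw [hf0'] at h2
    exact h2
  · intro hf0
    have hcomm : ∀ (g : G) (v : Y), f.hom (Y.ρ g v) = V.ρ g (f.hom v) := by
      intro g v
      have := congrArg (fun (φ : Y.V ⟶ V.V) => φ v) (f.comm g)
      exact this
    have hKbot : LinearMap.ker (f.hom.hom.hom : Y →ₗ[ℂ] V) = ⊥ := by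
      have hKinv : ∀ g : G, ∀ v ∈ LinearMap.ker (f.hom.hom.hom : Y →ₗ[ℂ] V),
          Y.ρ g v ∈ LinearMap.ker (f.hom.hom.hom : Y →ₗ[ℂ] V) := by
        intro g v hv
        rw [LinearMap.mem_ker] at hv ⊢
        have hv' : f.hom v = (0 : V) := hv
        show f.hom ((Y.ρ g) v) = (0 : V)
        rw [hcomm g v, hv', map_zero]
      set K := LinearMap.ker (f.hom.hom.hom : Y →ₗ[ℂ] V)
      have hι : auxSubrepι Y K hKinv ≫ f = 0 := by
        apply Action.hom_ext
        ext x
        exact x.2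
      rw [← Limits.zero_comp (f := f)] at hι
      have := (cancel_mono f).1 hι
      rw [Submodule.eq_bot_iff]
      intro x hx
      have h3 := congrArg Action.Hom.hom this
      rw [Action.zero_hom] at h3
      have := congrArg (fun (φ : (auxSubrep Y K hKinv).V ⟶ Y.V) => φ ⟨x, hx⟩) h3
      exact this
    have hinj : Function.Injective (f.hom.hom.hom : Y →ₗ[ℂ] V) := LinearMap.ker_eq_bot.1 hKbot
    have hsurj : Function.Surjective f.hom := by
      have hRinv : ∀ g : G, ∀ v ∈ LinearMap.range (f.hom.hom.hom : Y →ₗ[ℂ] V),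
          V.ρ g v ∈ LinearMap.range (f.hom.hom.hom : Y →ₗ[ℂ] V) := by
        rintro g v ⟨w, rfl⟩
        exact ⟨Y.ρ g w, hcomm g w⟩
      rcases h _ hRinv with hbot | htop
      · exfalso
        apply hf0
        apply Action.hom_ext
        ext v
        have : f.hom v ∈ LinearMap.range (f.hom.hom.hom : Y →ₗ[ℂ] V) := ⟨v, rfl⟩
        rw [hbot] at this
        exact (Submodule.mem_bot ℂ).1 this
      · intro v
        have : v ∈ LinearMap.range (f.hom.hom.hom : Y →ₗ[ℂ] V) := by rw [htop]; trivial
        exact this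
    let e := LinearEquiv.ofBijective (f.hom.hom.hom : Y →ₗ[ℂ] V) ⟨hinj, hsurj⟩
    haveI : IsIso f.hom := by
      refine ⟨FGModuleCat.ofHom e.symm.toLinearMap, ?_, ?_⟩
      · ext x; exact e.symm_apply_apply x
      · ext x; exact e.apply_symm_apply x
    exact Action.isIso_of_hom_isIso f

set_option maxHeartbeats 3000000 in
private lemma aux_separation [Fintype G] (M : Subgroup G) [M.Normal] (g : G)
    (hg : ∀ V : FDRep ℂ G, Simple V → (∀ m ∈ M, V.ρ m = 1) → V.ρ g = 1) : g ∈ M := by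
  by_contra hgM
  haveI : Fintype (G ⧸ M) := Fintype.ofFinite _
  haveI : NeZero ((Fintype.card (G ⧸ M) : ℂ)) :=
    ⟨Nat.cast_ne_zero.2 (Fintype.card_ne_zero (α := G ⧸ M))⟩
  set Q := G ⧸ M with hQ
  set A := MonoidAlgebra ℂ Q with hA
  haveI : FiniteDimensional ℂ A := inferInstance
  set u : A := MonoidAlgebra.of ℂ Q (QuotientGroup.mk g) with hu
  have hex : ∃ S : Submodule A A, IsSimpleModule A ↥S ∧ ∃ s ∈ S, u • s ≠ s := by
    by_contra hall
    push_neg at hall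
    have hact : ∀ a : A, u • a = a := by
      intro a
      have hmem : a ∈ (sSup { m : Submodule A A | IsSimpleModule A ↥m } : Submodule A A) := by
        rw [IsSemisimpleModule.sSup_simples_eq_top]; trivial
      rw [sSup_eq_iSup'] at hmem
      refine Submodule.iSup_induction _ (motive := fun a => u • a = a) hmem ?_ ?_ ?_
      · rintro ⟨S, hS⟩ x hx
        exact hall S hS x hx
      · exact smul_zero u
      · intro x y hx hy
        rw [smul_add, hx, hy]
    have h1 := hact 1
    rw [smul_eq_mul, mul_one] at h1
    have : (QuotientGroup.mk g : Q) = 1 := by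
      apply MonoidAlgebra.of_injective (R := ℂ) (M := Q)
      rw [map_one]
      exact h1
    exact hgM (QuotientGroup.eq_one_iff g |>.1 this)
  obtain ⟨S, hS, s₀, hs₀S, hs₀⟩ := hex
  haveI : FiniteDimensional ℂ ↥S :=
    FiniteDimensional.of_injective ((S.subtype).restrictScalars ℂ) (Submodule.injective_subtype S)
  have hsc : ∀ (c : ℂ) (a : A) (n : ↥S), a • (c • n) = c • (a • n) := by
    intro c a n
    calc a • (c • n) = a • ((algebraMap ℂ A c) • n) := by rw [algebraMap_smul]
      _ = (a * algebraMap ℂ A c) • n := (mul_smul _ _ _).symm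
      _ = (algebraMap ℂ A c * a) • n := by rw [Algebra.commutes]
      _ = (algebraMap ℂ A c) • (a • n) := mul_smul _ _ _
      _ = c • (a • n) := algebraMap_smul _ _ _
  set ρS : Representation ℂ G ↥S :=
    { toFun := fun x =>
        { toFun := fun s => (MonoidAlgebra.of ℂ Q (QuotientGroup.mk x) • s : ↥S)
          map_add' := fun a b => smul_add _ a b
          map_smul' := fun c a => by simp only [RingHom.id_apply]; rw [hsc] }
      map_one' := by
        refine LinearMap.ext fun s => ?_
        show (MonoidAlgebra.of ℂ Q (QuotientGroup.mk 1) • s : ↥S) = s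
        rw [QuotientGroup.mk_one, map_one, one_smul]
      map_mul' := by
        intro x y
        refine LinearMap.ext fun s => ?_
        show (MonoidAlgebra.of ℂ Q (QuotientGroup.mk (x * y)) • s : ↥S) = _
        rw [QuotientGroup.mk_mul, map_mul, mul_smul]
        rfl } with hρS
  set V : FDRep ℂ G := FDRep.of ρS with hV
  haveI hsimple : Simple V := by
    apply aux_simple_of_invariant_subspaces V
    · exact IsSimpleModule.nontrivial A ↥S
    · intro W hW
      let W₀ : Submodule ℂ ↥S := W
      have hW₀ : ∀ (x : G), ∀ v ∈ W₀, ρS x v ∈ W₀ := hW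
      let W' : Submodule A ↥S :=
        { carrier := W₀
          add_mem' := fun ha hb => W₀.add_mem ha hb
          zero_mem' := W₀.zero_mem
          smul_mem' := by
            intro a s hs
            induction a using MonoidAlgebra.induction_on with
            | of q =>
              obtain ⟨x, rfl⟩ := QuotientGroup.mk_surjective q
              exact hW₀ x s hs
            | add f₁ f₂ hf₁ hf₂ => rw [add_smul]; exact W₀.add_mem hf₁ hf₂
            | smul c f hf => rw [smul_assoc]; exact W₀.smul_mem c hf }
      rcases eq_bot_or_eq_top W' with hbot | htop
      · left
        rw [Submodule.eq_bot_iff] at hbot ⊢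
        exact fun x hx => hbot x hx
      · right
        rw [Submodule.eq_top_iff'] at htop ⊢
        exact htop
  have htriv : ∀ m ∈ M, V.ρ m = 1 := by
    intro m hm
    refine LinearMap.ext fun (s : ↥S) => ?_
    show (MonoidAlgebra.of ℂ Q (QuotientGroup.mk m) • s : ↥S) = s
    have hm1 : (QuotientGroup.mk m : Q) = 1 := (QuotientGroup.eq_one_iff m).2 hm
    rw [hm1, map_one, one_smul]
  have := hg V hsimple htriv
  apply hs₀
  have h2 : V.ρ g ⟨s₀, hs₀S⟩ = (⟨s₀, hs₀S⟩ : ↥S) := by rw [this]; rfl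
  have h3 : (MonoidAlgebra.of ℂ Q (QuotientGroup.mk g) • (⟨s₀, hs₀S⟩ : ↥S) : ↥S)
      = (⟨s₀, hs₀S⟩ : ↥S) := h2
  have h4 := congrArg (Subtype.val) h3
  exact h4

end SimpleCriterion

private lemma aux_center_nontrivial {H : Type*} [Group H] [Group.IsNilpotent H]
    [Nontrivial H] : ∃ z : H, z ∈ Subgroup.center H ∧ z ≠ 1 := by
  by_contra hc
  push_neg at hc
  have hbot : Subgroup.center H = ⊥ := by
    rw [Subgroup.eq_bot_iff_forall]
    exact hc
  have hall : ∀ k, Subgroup.upperCentralSeries H k = ⊥ := by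
    intro k
    induction k with
    | zero => exact Subgroup.upperCentralSeries_zero H
    | succ k ih =>
      rw [Subgroup.eq_bot_iff_forall]
      intro x hx
      rw [Subgroup.mem_upperCentralSeries_succ_iff] at hx
      have hxc : x ∈ Subgroup.center H := by
        rw [Subgroup.mem_center_iff]
        intro g
        have h1 := hx g
        rw [ih, Subgroup.mem_bot] at h1
        have h2 := commutatorElement_eq_one_iff_commute.1 (show ⁅x, g⁆ = 1 from h1)
        exact h2.symm
      rw [hbot, Subgroup.mem_bot] at hxc; exact hxc
  obtain ⟨k, hk⟩ := Group.IsNilpotent.nilpotent (G := H)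
  rw [hall k] at hk
  obtain ⟨a, b, hab⟩ := exists_pair_ne H
  apply hab
  have ha : a ∈ (⊥ : Subgroup H) := by rw [hk]; trivial
  have hb : b ∈ (⊥ : Subgroup H) := by rw [hk]; trivial
  rw [Subgroup.mem_bot] at ha hb; rw [ha, hb]

/-- a nested group `G` with chain of centers `X 0 > ⋯ > X n` is nilpotent iff
`⁅X (i-1), G⁆ ≤ X i` for all `1 ≤ i ≤ n`. -/
theorem nilpotent_iff_central_chain (G : Type) [Group G] [Fintype G]
    (n : ℕ) (X : ℕ → Subgroup G) (hX : IsChainOfCenters n X) :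
    Group.IsNilpotent G ↔ ∀ i < n, ⁅X i, (⊤ : Subgroup G)⁆ ≤ X (i + 1) := by
  obtain ⟨hX0, hXnorm, hXlt, hXex, hXall⟩ := hX
  have hmono : ∀ j, j ≤ n → ∀ i, i ≤ j → X j ≤ X i := by
    intro j
    induction j with
    | zero =>
      intro _ i hi
      have : i = 0 := Nat.le_zero.1 hi
      rw [this]
    | succ k ih =>
      intro hk i hi
      rcases Nat.eq_or_lt_of_le hi with heq | hlt
      · rw [heq]
      · exact le_trans (le_of_lt (hXlt k (by omega))) (ih (by omega) i (by omega))
  have hXnZ : ∀ x ∈ X n, ∀ g : G, ⁅x, g⁆ = 1 := by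
    intro x hx g
    have hsep := aux_separation (⊥ : Subgroup G) ⁅x, g⁆ ?_
    · simpa [Subgroup.mem_bot] using hsep
    · intro V hsimple _
      obtain ⟨j, hjn, hXj⟩ := hXall V hsimple
      have hxV : x ∈ charCenter V := by
        rw [hXj]
        exact hmono n le_rfl j hjn hx
      obtain ⟨c, hc⟩ := aux_charCenter_scalar V x hxV
      exact aux_rho_commutator_eq_one V x c hc g
  constructor
  · intro hnil
    haveI := hnil
    intro i hi
    haveI hZn : (X (i + 1)).Normal := hXnorm (i + 1) (by omega)
    have hZt : X (i + 1) < ⊤ := lt_of_lt_of_le (hXlt i hi) le_top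
    obtain ⟨g₀, hg₀⟩ : ∃ g₀, g₀ ∉ X (i + 1) := by
      by_contra hcon
      push_neg at hcon
      exact absurd ((Subgroup.eq_top_iff' (X (i + 1))).2 hcon) (ne_of_lt hZt)
    haveI : Nontrivial (G ⧸ X (i + 1)) :=
      ⟨⟨QuotientGroup.mk g₀, 1, by simpa [QuotientGroup.eq_one_iff] using hg₀⟩⟩
    obtain ⟨zbar, hzbar, hzbar1⟩ := aux_center_nontrivial (H := G ⧸ X (i + 1))
    set Y : Subgroup G :=
      Subgroup.comap (QuotientGroup.mk' (X (i + 1))) (Subgroup.center (G ⧸ X (i + 1))) with hYdef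
    haveI hYn : Y.Normal := Subgroup.Normal.comap inferInstance _
    have hYcomm : ∀ y ∈ Y, ∀ g : G, ⁅y, g⁆ ∈ X (i + 1) := by
      intro y hy g
      rw [Subgroup.mem_comap] at hy
      rw [← QuotientGroup.eq_one_iff]
      have : (QuotientGroup.mk (⁅y, g⁆ : G) : G ⧸ X (i + 1))
          = ⁅(QuotientGroup.mk y : G ⧸ X (i + 1)), (QuotientGroup.mk g : G ⧸ X (i + 1))⁆ :=
        map_commutatorElement (QuotientGroup.mk' (X (i + 1))) y g
      rw [this]
      rw [commutatorElement_eq_one_iff_commute]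
      have := Subgroup.mem_center_iff.1 hy (QuotientGroup.mk g)
      exact this.symm
    have hZY : X (i + 1) < Y := by
      have hle : X (i + 1) ≤ Y := by
        intro z hz
        rw [Subgroup.mem_comap]
        have : (QuotientGroup.mk' (X (i + 1))) z = 1 := (QuotientGroup.eq_one_iff z).2 hz
        rw [this]
        exact Subgroup.one_mem _
      obtain ⟨y, hy⟩ := QuotientGroup.mk'_surjective (X (i + 1)) zbar
      refine lt_of_le_of_ne hle ?_
      intro heq
      have hyY : y ∈ Y := by rw [Subgroup.mem_comap, hy]; exact hzbar
      rw [← heq] at hyY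
      exact hzbar1 (by rw [← hy]; exact (QuotientGroup.eq_one_iff y).2 hyY)
    have hMle : ⁅Y, (⊤ : Subgroup G)⁆ ≤ X (i + 1) :=
      Subgroup.commutator_le.2 (fun y hy g _ => hYcomm y hy g)
    rw [Subgroup.commutator_le]
    intro x hx g _
    refine hMle ?_
    apply aux_separation ⁅Y, (⊤ : Subgroup G)⁆ ⁅x, g⁆
    intro V hsimple htriv
    haveI := hsimple
    obtain ⟨j, hjn, hXj⟩ := hXall V hsimple
    have hYc : ∀ y ∈ Y, y ∈ charCenter V := by
      intro y hy
      have hcomm : ∀ h' : G, V.ρ y * V.ρ h' = V.ρ h' * V.ρ y := by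
        intro h'
        apply aux_commute_of_rho_commutator
        exact htriv _ (Subgroup.commutator_mem_commutator hy (Subgroup.mem_top h'))
      obtain ⟨c, hc⟩ := aux_schur_scalar V y hcomm
      exact aux_scalar_mem_charCenter V y c hc
    have hYj : Y ≤ X j := by
      intro y hy
      have := hYc y hy
      rwa [hXj] at this
    have hji : j ≤ i := by
      by_contra hji
      have hcontra : X j ≤ X (i + 1) := hmono j hjn (i + 1) (by omega)
      exact (not_le_of_gt hZY) (le_trans hYj hcontra)
    have hxj : x ∈ charCenter V := by
      rw [hXj]
      exact hmono i (by omega) j hji hx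
    obtain ⟨c, hc⟩ := aux_charCenter_scalar V x hxj
    exact aux_rho_commutator_eq_one V x c hc g
  · intro h
    rw [nilpotent_iff_lowerCentralSeries]
    refine ⟨n + 1, ?_⟩
    have hdesc : IsDescendingCentralSeries (fun i => if i ≤ n then X i else ⊥) := by
      constructor
      · simp [hX0]
      · intro x m hx g
        simp only at hx ⊢
        by_cases hm : m < n
        · rw [if_pos (by omega : m ≤ n)] at hx
          rw [if_pos (by omega : m + 1 ≤ n)]
          exact h m hm (Subgroup.commutator_mem_commutator hx (Subgroup.mem_top g))
        · by_cases hm2 : m = n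
          · subst hm2
            rw [if_pos le_rfl] at hx
            rw [if_neg (by omega)]
            rw [Subgroup.mem_bot]
            exact hXnZ x hx g
          · rw [if_neg (by omega)] at hx
            rw [Subgroup.mem_bot] at hx
            subst hx
            rw [if_neg (by omega)]
            rw [Subgroup.mem_bot]
            group
    have hlow := descending_central_series_ge_lower _ hdesc (n + 1)
    rw [if_neg (by omega)] at hlow
    exact le_bot_iff.1 hlow
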